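/- Let D be a 2×2 diagonal real matrix with strictly positive diagonal entries, and let θ be a real random variable with Gaussian distribution of mean μ and variance v > 0. Then E[(T_θ D T_θᵀ)⁻¹] = (1 − e^{-2v}) · (tr(D⁻¹)/2) · I₂ + e^{-2v} · T_μ D⁻¹ T_μᵀ, where I₂ is the 2×2 identity matrix. -/

import Mathlib

open MeasureTheory ProbabilityTheory Real NNReal Matrix
open scoped ENNReal

/-- The 2×2 rotation matrix by angle `θ`. -/
noncomputable def rotMat (θ : ℝ) : Matrix (Fin 2) (Fin 2) ℝ :=
  !![Real.cos θ, -Real.sin θ; Real.sin θ, Real.cos θ]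

lemma charFun_gauss (μ : ℝ) (v : ℝ≥0) (hv : v ≠ 0) :
    ∫ θ : ℝ, Complex.exp (2 * θ * Complex.I) ∂(gaussianReal μ v)
      = Complex.exp (2 * μ * Complex.I - 2 * v) := by
  have hv0 : (0:ℝ) < v := by exact_mod_cast pos_iff_ne_zero.mpr hv
  rw [gaussianReal_of_var_ne_zero _ hv]
  have hpdf : gaussianPDF μ v = fun x => ((Real.toNNReal (gaussianPDFReal μ v x) : ℝ≥0) : ℝ≥0∞) := by
    funext x; rfl
  rw [hpdf, integral_withDensity_eq_integral_smul
    ((measurable_gaussianPDFReal μ v).real_toNNReal) _]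
  have heq : (fun x : ℝ => (Real.toNNReal (gaussianPDFReal μ v x)) • Complex.exp (2 * x * Complex.I))
      = fun x : ℝ => ((Real.sqrt (2 * Real.pi * v))⁻¹ : ℂ) *
          Complex.exp ((-(1/(2*(v:ℂ)))) * x^2 + ((μ:ℂ)/v + 2*Complex.I) * x + (-(μ:ℂ)^2/(2*v))) := by
    funext x
    have h1 : (Real.toNNReal (gaussianPDFReal μ v x)) • Complex.exp (2 * x * Complex.I)
        = ((gaussianPDFReal μ v x : ℝ) : ℂ) * Complex.exp (2 * x * Complex.I) := by
      rw [NNReal.smul_def, Real.coe_toNNReal _ (gaussianPDFReal_nonneg μ v x)]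
      rw [Complex.real_smul]
    rw [h1]
    rw [gaussianPDFReal]
    push_cast
    rw [mul_assoc, ← Complex.exp_add]
    congr 2
    have : (v:ℂ) ≠ 0 := by exact_mod_cast hv
    field_simp
    ring
  rw [heq, MeasureTheory.integral_const_mul, integral_cexp_quadratic (by
      simp; positivity) _ _]
  have hb : ((Real.pi : ℂ) / -(-(1/(2*(v:ℂ))))) = ((2 * Real.pi * v : ℝ) : ℂ) := by
    have : (v:ℂ) ≠ 0 := by exact_mod_cast hv
    push_cast; field_simp
  rw [hb]
  have hpow : ((2 * Real.pi * v : ℝ) : ℂ) ^ (1/2 : ℂ) = ((Real.sqrt (2 * Real.pi * v) : ℝ) : ℂ) := by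
    rw [Real.sqrt_eq_rpow, Complex.ofReal_cpow (by positivity)]
    norm_num
  rw [hpow]
  have hsq : ((Real.sqrt (2 * Real.pi * v) : ℝ) : ℂ) ≠ 0 := by
    simp only [ne_eq, Complex.ofReal_eq_zero]
    positivity
  rw [← mul_assoc, inv_mul_cancel₀ hsq, one_mul]
  congr 1
  have : (v:ℂ) ≠ 0 := by exact_mod_cast hv
  field_simp
  linear_combination (16*((v:ℝ):ℂ)^2) * Complex.I_sq


lemma integrable_cexp2 (μ : ℝ) (v : ℝ≥0) :
    Integrable (fun θ : ℝ => Complex.exp (2 * θ * Complex.I)) (gaussianReal μ v) := by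
  refine (integrable_const (1:ℝ)).mono' ?_ ?_
  · exact (Complex.continuous_exp.comp (by continuity)).aestronglyMeasurable
  · refine Filter.Eventually.of_forall fun θ => ?_
    rw [Complex.norm_exp]
    simp

lemma int_cos_gauss (μ : ℝ) (v : ℝ≥0) (hv : v ≠ 0) :
    ∫ θ : ℝ, Real.cos (2 * θ) ∂(gaussianReal μ v) = Real.exp (-2 * v) * Real.cos (2 * μ) := by
  have h := charFun_gauss μ v hv
  have h2 : ∀ θ : ℝ, Real.cos (2 * θ) = (Complex.exp (2 * θ * Complex.I)).re := by
    intro θ; rw [Complex.exp_re]; simp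
  simp_rw [h2]
  have hre := integral_re (𝕜 := ℂ) (μ := gaussianReal μ v) (integrable_cexp2 μ v)
  simp only [RCLike.re_to_complex] at hre
  rw [hre, h, Complex.exp_re]
  simp [neg_mul, mul_comm, Complex.exp_re, Complex.exp_im]

lemma int_sin_gauss (μ : ℝ) (v : ℝ≥0) (hv : v ≠ 0) :
    ∫ θ : ℝ, Real.sin (2 * θ) ∂(gaussianReal μ v) = Real.exp (-2 * v) * Real.sin (2 * μ) := by
  have h := charFun_gauss μ v hv
  have h2 : ∀ θ : ℝ, Real.sin (2 * θ) = (Complex.exp (2 * θ * Complex.I)).im := by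
    intro θ; rw [Complex.exp_im]; simp
  simp_rw [h2]
  have him := integral_im (𝕜 := ℂ) (μ := gaussianReal μ v) (integrable_cexp2 μ v)
  simp only [RCLike.im_to_complex] at him
  rw [him, h, Complex.exp_im]
  simp [neg_mul, mul_comm, Complex.exp_re, Complex.exp_im]


theorem gaussian_expectation_rot_congruence_inv_diagonal
    (d : Fin 2 → ℝ) (hd : ∀ i, 0 < d i)
    (μ : ℝ) (v : ℝ≥0) (hv : 0 < v) :
    (Matrix.of fun i j =>
        ∫ θ, (rotMat θ * Matrix.diagonal d * (rotMat θ)ᵀ)⁻¹ i j ∂(gaussianReal μ v))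
      = (1 - Real.exp (-2 * (v : ℝ))) •
          ((Matrix.trace (Matrix.diagonal d)⁻¹ / 2) • (1 : Matrix (Fin 2) (Fin 2) ℝ))
        + Real.exp (-2 * (v : ℝ)) •
          (rotMat μ * (Matrix.diagonal d)⁻¹ * (rotMat μ)ᵀ) := by
  have hvne : v ≠ 0 := hv.ne'
  set E := Real.exp (-2 * (v : ℝ)) with hE
  -- inverse of the diagonal matrix
  have hdinv : (Matrix.diagonal d)⁻¹ = Matrix.diagonal (fun i => (d i)⁻¹) := by
    refine Matrix.inv_eq_right_inv ?_
    rw [Matrix.diagonal_mul_diagonal]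
    rw [show (fun i => d i * (d i)⁻¹) = fun _ => (1:ℝ) from funext fun i => mul_inv_cancel₀ (hd i).ne']
    exact Matrix.diagonal_one
  -- rotation matrix orthogonality
  have hTtT : ∀ θ : ℝ, (rotMat θ)ᵀ * rotMat θ = 1 := by
    intro θ
    ext i j
    fin_cases i <;> fin_cases j <;>
      simp [rotMat, Matrix.mul_apply, Fin.sum_univ_two, Matrix.one_apply, Matrix.vecHead,
        Matrix.vecTail] <;>
      nlinarith [Real.sin_sq_add_cos_sq θ]
  have hTTt : ∀ θ : ℝ, rotMat θ * (rotMat θ)ᵀ = 1 := by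
    intro θ
    ext i j
    fin_cases i <;> fin_cases j <;>
      simp [rotMat, Matrix.mul_apply, Fin.sum_univ_two, Matrix.one_apply, Matrix.vecHead,
        Matrix.vecTail] <;>
      nlinarith [Real.sin_sq_add_cos_sq θ]
  have hTinv : ∀ θ : ℝ, (rotMat θ)⁻¹ = (rotMat θ)ᵀ :=
    fun θ => Matrix.inv_eq_right_inv (hTTt θ)
  have hTtinv : ∀ θ : ℝ, ((rotMat θ)ᵀ)⁻¹ = rotMat θ :=
    fun θ => Matrix.inv_eq_right_inv (hTtT θ)
  have hinv : ∀ θ : ℝ, (rotMat θ * Matrix.diagonal d * (rotMat θ)ᵀ)⁻¹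
      = rotMat θ * Matrix.diagonal (fun i => (d i)⁻¹) * (rotMat θ)ᵀ := by
    intro θ
    rw [Matrix.mul_inv_rev, Matrix.mul_inv_rev, hTinv, hTtinv, hdinv, Matrix.mul_assoc]
  -- the generic integral computation
  have hic : Integrable (fun θ : ℝ => Real.cos (2 * θ)) (gaussianReal μ v) := by
    refine (integrable_const (1:ℝ)).mono'
      ((Real.continuous_cos.comp (continuous_const.mul continuous_id)).aestronglyMeasurable)
      (Filter.Eventually.of_forall fun θ => ?_)
    simp [Real.norm_eq_abs, Real.abs_cos_le_one]
  have his : Integrable (fun θ : ℝ => Real.sin (2 * θ)) (gaussianReal μ v) := by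
    refine (integrable_const (1:ℝ)).mono'
      ((Real.continuous_sin.comp (continuous_const.mul continuous_id)).aestronglyMeasurable)
      (Filter.Eventually.of_forall fun θ => ?_)
    simp [Real.norm_eq_abs, Real.abs_sin_le_one]
  have hint : ∀ c₁ c₂ c₃ : ℝ,
      ∫ θ, (c₁ + c₂ * Real.cos (2 * θ) + c₃ * Real.sin (2 * θ)) ∂(gaussianReal μ v)
        = c₁ + c₂ * (E * Real.cos (2 * μ)) + c₃ * (E * Real.sin (2 * μ)) := by
    intro c₁ c₂ c₃
    have h12 : Integrable (fun θ : ℝ => c₁ + c₂ * Real.cos (2 * θ)) (gaussianReal μ v) :=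
      (integrable_const c₁).add (hic.const_mul c₂)
    have h3 : Integrable (fun θ : ℝ => c₃ * Real.sin (2 * θ)) (gaussianReal μ v) :=
      his.const_mul c₃
    rw [integral_add h12 h3, integral_add (integrable_const c₁) (hic.const_mul c₂),
      integral_const, MeasureTheory.integral_const_mul, MeasureTheory.integral_const_mul,
      int_cos_gauss μ v hvne, int_sin_gauss μ v hvne]
    simp [hE]
  -- now entrywise
  rw [hdinv]
  ext i j
  simp only [Matrix.of_apply]
  simp_rw [hinv]
  have hent : ∀ i j : Fin 2, ((1 - E) •
          ((Matrix.trace (Matrix.diagonal fun i => (d i)⁻¹) / 2) • (1 : Matrix (Fin 2) (Fin 2) ℝ))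
        + E • (rotMat μ * (Matrix.diagonal fun i => (d i)⁻¹) * (rotMat μ)ᵀ)) i j
      = (1 - E) * ((( (d 0)⁻¹ + (d 1)⁻¹) / 2) * (if i = j then (1:ℝ) else 0))
        + E * ((rotMat μ * (Matrix.diagonal fun i => (d i)⁻¹) * (rotMat μ)ᵀ) i j) := by
    intro i j
    simp [Matrix.add_apply, Matrix.smul_apply, Matrix.one_apply, Matrix.trace_diagonal,
      Fin.sum_univ_two, smul_eq_mul]
  fin_cases i <;> fin_cases j
  · show (∫ θ : ℝ, ((rotMat θ * Matrix.diagonal fun i => (d i)⁻¹) * (rotMat θ)ᵀ) 0 0 ∂(gaussianReal μ v)) = _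
    rw [show (fun θ : ℝ => ((rotMat θ * Matrix.diagonal fun i => (d i)⁻¹) * (rotMat θ)ᵀ) 0 0)
        = fun θ : ℝ => (((d 0)⁻¹ + (d 1)⁻¹) / 2) + (((d 0)⁻¹ - (d 1)⁻¹) / 2) * Real.cos (2 * θ)
            + 0 * Real.sin (2 * θ) from funext fun θ => by
      simp [rotMat, Matrix.mul_apply, Fin.sum_univ_two, Matrix.diagonal_apply, Matrix.vecHead,
        Matrix.vecTail, Matrix.vecMul_diagonal]
      rw [Real.cos_two_mul θ]
      linear_combination (d 1)⁻¹ * Real.sin_sq_add_cos_sq θ]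
    rw [hint, hent]
    simp [rotMat, Matrix.mul_apply, Fin.sum_univ_two, Matrix.diagonal_apply, Matrix.vecHead,
      Matrix.vecTail, Matrix.vecMul_diagonal]
    rw [Real.cos_two_mul μ]
    linear_combination (-E * (d 1)⁻¹) * Real.sin_sq_add_cos_sq μ
  · show (∫ θ : ℝ, ((rotMat θ * Matrix.diagonal fun i => (d i)⁻¹) * (rotMat θ)ᵀ) 0 1 ∂(gaussianReal μ v)) = _
    rw [show (fun θ : ℝ => ((rotMat θ * Matrix.diagonal fun i => (d i)⁻¹) * (rotMat θ)ᵀ) 0 1)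
        = fun θ : ℝ => (0:ℝ) + 0 * Real.cos (2 * θ)
            + (((d 0)⁻¹ - (d 1)⁻¹) / 2) * Real.sin (2 * θ) from funext fun θ => by
      simp [rotMat, Matrix.mul_apply, Fin.sum_univ_two, Matrix.diagonal_apply, Matrix.vecHead,
        Matrix.vecTail, Matrix.vecMul_diagonal]
      rw [Real.sin_two_mul θ]
      ring]
    rw [hint, hent]
    simp [rotMat, Matrix.mul_apply, Fin.sum_univ_two, Matrix.diagonal_apply, Matrix.vecHead,
      Matrix.vecTail, Matrix.vecMul_diagonal]
    rw [Real.sin_two_mul μ]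
    ring
  · show (∫ θ : ℝ, ((rotMat θ * Matrix.diagonal fun i => (d i)⁻¹) * (rotMat θ)ᵀ) 1 0 ∂(gaussianReal μ v)) = _
    rw [show (fun θ : ℝ => ((rotMat θ * Matrix.diagonal fun i => (d i)⁻¹) * (rotMat θ)ᵀ) 1 0)
        = fun θ : ℝ => (0:ℝ) + 0 * Real.cos (2 * θ)
            + (((d 0)⁻¹ - (d 1)⁻¹) / 2) * Real.sin (2 * θ) from funext fun θ => by
      simp [rotMat, Matrix.mul_apply, Fin.sum_univ_two, Matrix.diagonal_apply, Matrix.vecHead,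
        Matrix.vecTail, Matrix.vecMul_diagonal]
      rw [Real.sin_two_mul θ]
      ring]
    rw [hint, hent]
    simp [rotMat, Matrix.mul_apply, Fin.sum_univ_two, Matrix.diagonal_apply, Matrix.vecHead,
      Matrix.vecTail, Matrix.vecMul_diagonal]
    rw [Real.sin_two_mul μ]
    ring
  · show (∫ θ : ℝ, ((rotMat θ * Matrix.diagonal fun i => (d i)⁻¹) * (rotMat θ)ᵀ) 1 1 ∂(gaussianReal μ v)) = _
    rw [show (fun θ : ℝ => ((rotMat θ * Matrix.diagonal fun i => (d i)⁻¹) * (rotMat θ)ᵀ) 1 1)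
        = fun θ : ℝ => (((d 0)⁻¹ + (d 1)⁻¹) / 2) + (-(((d 0)⁻¹ - (d 1)⁻¹) / 2)) * Real.cos (2 * θ)
            + 0 * Real.sin (2 * θ) from funext fun θ => by
      simp [rotMat, Matrix.mul_apply, Fin.sum_univ_two, Matrix.diagonal_apply, Matrix.vecHead,
        Matrix.vecTail, Matrix.vecMul_diagonal]
      rw [Real.cos_two_mul θ]
      linear_combination (d 0)⁻¹ * Real.sin_sq_add_cos_sq θ]
    rw [hint, hent]
    simp [rotMat, Matrix.mul_apply, Fin.sum_univ_two, Matrix.diagonal_apply, Matrix.vecHead,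
      Matrix.vecTail, Matrix.vecMul_diagonal]
    rw [Real.cos_two_mul μ]
    linear_combination (-E * (d 0)⁻¹) * Real.sin_sq_add_cos_sq μ
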